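/- Let C be a category with an initial object and binary coproducts in which coproducts are disjoint and every coproduct inclusion satisfies (E1). Then every morphism of C satisfying (E1) is extensive. -/

import Mathlib

open CategoryTheory CategoryTheory.Limits

universe v u

variable {C : Type u} [Category.{v} C]

/-- `i₁ : X₁ ⟶ X` and `i₂ : X₂ ⟶ X` form a binary coproduct diagram. -/
def IsCoprodDiagram {X₁ X₂ X : C} (i₁ : X₁ ⟶ X) (i₂ : X₂ ⟶ X) : Prop :=
  Nonempty (IsColimit (BinaryCofan.mk i₁ i₂))

/-- `p₁ : X ⟶ X₁` and `p₂ : X ⟶ X₂` form a binary product diagram. -/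
def IsProdDiagram {X X₁ X₂ : C} (p₁ : X ⟶ X₁) (p₂ : X ⟶ X₂) : Prop :=
  Nonempty (IsLimit (BinaryFan.mk p₁ p₂))

/-- Condition (E1): pullbacks of `f` along both inclusions of any binary coproduct diagram
exist and the resulting legs form a binary coproduct diagram. -/
def SatE1 {A X : C} (f : A ⟶ X) : Prop :=
  ∀ {X₁ X₂ : C} (x₁ : X₁ ⟶ X) (x₂ : X₂ ⟶ X), IsCoprodDiagram x₁ x₂ →
    ∃ (A₁ A₂ : C) (a₁ : A₁ ⟶ A) (a₂ : A₂ ⟶ A) (f₁ : A₁ ⟶ X₁) (f₂ : A₂ ⟶ X₂),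
      IsPullback a₁ f₁ f x₁ ∧ IsPullback a₂ f₂ f x₂ ∧ IsCoprodDiagram a₁ a₂

/-- Condition (E2): in any commutative diagram over `f` whose rows are binary coproduct
diagrams, both squares are pullbacks. -/
def SatE2 {A X : C} (f : A ⟶ X) : Prop :=
  ∀ {A₁ A₂ X₁ X₂ : C} (a₁ : A₁ ⟶ A) (a₂ : A₂ ⟶ A) (x₁ : X₁ ⟶ X) (x₂ : X₂ ⟶ X)
    (f₁ : A₁ ⟶ X₁) (f₂ : A₂ ⟶ X₂),
    a₁ ≫ f = f₁ ≫ x₁ → a₂ ≫ f = f₂ ≫ x₂ →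
    IsCoprodDiagram x₁ x₂ → IsCoprodDiagram a₁ a₂ →
    IsPullback a₁ f₁ f x₁ ∧ IsPullback a₂ f₂ f x₂

/-- A morphism is extensive if it satisfies (E1) and (E2). -/
def Extensive {A X : C} (f : A ⟶ X) : Prop := SatE1 f ∧ SatE2 f

/-- Condition (C1): pushouts of `f` along both projections of any binary product diagram
exist and the resulting legs form a binary product diagram. -/
def SatC1 {A X : C} (f : A ⟶ X) : Prop :=
  ∀ {A₁ A₂ : C} (p₁ : A ⟶ A₁) (p₂ : A ⟶ A₂), IsProdDiagram p₁ p₂ →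
    ∃ (X₁ X₂ : C) (q₁ : X ⟶ X₁) (q₂ : X ⟶ X₂) (f₁ : A₁ ⟶ X₁) (f₂ : A₂ ⟶ X₂),
      IsPushout p₁ f f₁ q₁ ∧ IsPushout p₂ f f₂ q₂ ∧ IsProdDiagram q₁ q₂

/-- Condition (C2): in any commutative diagram over `f` whose rows are binary product
diagrams, both squares are pushouts. -/
def SatC2 {A X : C} (f : A ⟶ X) : Prop :=
  ∀ {A₁ A₂ X₁ X₂ : C} (p₁ : A ⟶ A₁) (p₂ : A ⟶ A₂) (q₁ : X ⟶ X₁) (q₂ : X ⟶ X₂)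
    (f₁ : A₁ ⟶ X₁) (f₂ : A₂ ⟶ X₂),
    p₁ ≫ f₁ = f ≫ q₁ → p₂ ≫ f₂ = f ≫ q₂ →
    IsProdDiagram p₁ p₂ → IsProdDiagram q₁ q₂ →
    IsPushout p₁ f f₁ q₁ ∧ IsPushout p₂ f f₂ q₂

/-- A morphism is coextensive if it satisfies (C1) and (C2). -/
def Coextensive {A X : C} (f : A ⟶ X) : Prop := SatC1 f ∧ SatC2 f

/-- A coproduct inclusion: a morphism admitting a complementary inclusion forming
a binary coproduct diagram. -/
def IsCoprodInclusion {A X : C} (ι : A ⟶ X) : Prop :=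
  ∃ (A' : C) (ι' : A' ⟶ X), IsCoprodDiagram ι ι'

/-- An extremal epimorphism: whenever `e = i ≫ m` with `m` a monomorphism, `m` is an
isomorphism. -/
def IsExtremalEpi {A B : C} (e : A ⟶ B) : Prop :=
  ∀ {I : C} (i : A ⟶ I) (m : I ⟶ B), Mono m → i ≫ m = e → IsIso m

/-- The binary strict refinement property for an object `X`. -/
def BinaryStrictRefinement (X : C) : Prop :=
  ∀ {A₁ A₂ B₁ B₂ : C} (a₁ : X ⟶ A₁) (a₂ : X ⟶ A₂) (b₁ : X ⟶ B₁) (b₂ : X ⟶ B₂),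
    IsProdDiagram a₁ a₂ → IsProdDiagram b₁ b₂ →
    ∃ (C₁₁ C₁₂ C₂₁ C₂₂ : C)
      (α₁₁ : A₁ ⟶ C₁₁) (α₁₂ : A₁ ⟶ C₁₂) (α₂₁ : A₂ ⟶ C₂₁) (α₂₂ : A₂ ⟶ C₂₂)
      (β₁₁ : B₁ ⟶ C₁₁) (β₁₂ : B₂ ⟶ C₁₂) (β₂₁ : B₁ ⟶ C₂₁) (β₂₂ : B₂ ⟶ C₂₂),
      a₁ ≫ α₁₁ = b₁ ≫ β₁₁ ∧ a₁ ≫ α₁₂ = b₂ ≫ β₁₂ ∧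
      a₂ ≫ α₂₁ = b₁ ≫ β₂₁ ∧ a₂ ≫ α₂₂ = b₂ ≫ β₂₂ ∧
      IsProdDiagram α₁₁ α₁₂ ∧ IsProdDiagram α₂₁ α₂₂ ∧
      IsProdDiagram β₁₁ β₂₁ ∧ IsProdDiagram β₁₂ β₂₂

/-- A jointly monomorphic pair which is a reflexive, symmetric and transitive relation. -/
def IsEquivalenceRelationPair {R X : C} (r₁ r₂ : R ⟶ X) : Prop :=
  (∀ {T : C} (a b : T ⟶ R), a ≫ r₁ = b ≫ r₁ → a ≫ r₂ = b ≫ r₂ → a = b) ∧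
  (∃ d : X ⟶ R, d ≫ r₁ = 𝟙 X ∧ d ≫ r₂ = 𝟙 X) ∧
  (∃ s : R ⟶ R, s ≫ r₁ = r₂ ∧ s ≫ r₂ = r₁) ∧
  (∀ {P : C} (p₁ p₂ : P ⟶ R), IsPullback p₁ p₂ r₂ r₁ →
    ∃ t : P ⟶ R, t ≫ r₁ = p₁ ≫ r₁ ∧ t ≫ r₂ = p₂ ≫ r₂)

section Helpers

/-- Swapping a binary coproduct diagram. -/
private lemma coprodSwap {X₁ X₂ X : C} {i₁ : X₁ ⟶ X} {i₂ : X₂ ⟶ X}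
    (h : IsCoprodDiagram i₁ i₂) : IsCoprodDiagram i₂ i₁ := by
  obtain ⟨h⟩ := h
  refine ⟨BinaryCofan.IsColimit.mk _ (fun f g => h.desc (BinaryCofan.mk g f))
    (fun f g => ?_) (fun f g => ?_) (fun f g m hm₁ hm₂ => ?_)⟩
  · exact h.fac (BinaryCofan.mk g f) ⟨WalkingPair.right⟩
  · exact h.fac (BinaryCofan.mk g f) ⟨WalkingPair.left⟩
  · refine BinaryCofan.IsColimit.hom_ext h ?_ ?_
    · exact hm₂.trans (h.fac (BinaryCofan.mk g f) ⟨WalkingPair.left⟩).symm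
    · exact hm₁.trans (h.fac (BinaryCofan.mk g f) ⟨WalkingPair.right⟩).symm

/-- A square with identity on one side over a mono is a pullback. -/
private lemma isPullback_id_mono {A B X : C} (h : A ⟶ B) (g : B ⟶ X) [Mono g] :
    IsPullback (𝟙 A) h (h ≫ g) g := by
  refine IsPullback.of_isLimit (PullbackCone.IsLimit.mk (by simp) (fun s => s.fst)
    (fun s => by simp) (fun s => ?_) (fun s m h1 h2 => by simpa using h1))
  exact (cancel_mono g).1 (by simpa using s.condition)

/-- Precomposing a pullback square with an isomorphism. -/
private lemma isPullback_precomp {P Q X Y Z : C} (e : Q ⟶ P) [IsIso e]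
    {fst : P ⟶ X} {snd : P ⟶ Y} {f : X ⟶ Z} {g : Y ⟶ Z}
    (h : IsPullback fst snd f g) : IsPullback (e ≫ fst) (e ≫ snd) f g := by
  refine IsPullback.of_isLimit (PullbackCone.IsLimit.mk
    (by simp [h.w]) (fun s => h.lift s.fst s.snd s.condition ≫ inv e)
    (fun s => by simp) (fun s => by simp) (fun s m h1 h2 => ?_))
  have hme : m ≫ e = h.lift s.fst s.snd s.condition :=
    h.hom_ext (by simpa using h1) (by simpa using h2)
  show m = h.lift s.fst s.snd s.condition ≫ inv e
  rw [← hme]; simp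

/-- If the second inclusion of a coproduct diagram is an isomorphism and the pullback of the
two inclusions is initial, then the domain of the first inclusion is initial. -/
private noncomputable def initial_of_iso_compl {C₁ C₂ Z P : C} {c₁ : C₁ ⟶ Z} {c₂ : C₂ ⟶ Z}
    {p₁ : P ⟶ C₁} {p₂ : P ⟶ C₂} (hP : IsPullback p₁ p₂ c₁ c₂) (hinit : IsInitial P)
    (hc₂ : IsIso c₂) : IsInitial C₁ := by
  haveI := hc₂
  have sq : IsPullback (𝟙 C₁) (c₁ ≫ inv c₂) c₁ c₂ := by
    simpa using isPullback_id_mono (c₁ ≫ inv c₂) c₂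
  exact hinit.ofIso (hP.isoIsPullback _ _ sq)

/-- A coproduct inclusion whose complement has initial domain is an isomorphism. -/
private lemma isIso_inl_of_initial {C₁ C₂ Z : C} {c₁ : C₁ ⟶ Z} {c₂ : C₂ ⟶ Z}
    (hco : IsColimit (BinaryCofan.mk c₁ c₂)) (h2 : IsInitial C₂) : IsIso c₁ := by
  have fac1 : c₁ ≫ hco.desc (BinaryCofan.mk (𝟙 C₁) (h2.to C₁)) = 𝟙 C₁ := by
    exact hco.fac (BinaryCofan.mk (𝟙 C₁) (h2.to C₁)) ⟨WalkingPair.left⟩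
  refine ⟨hco.desc (BinaryCofan.mk (𝟙 C₁) (h2.to C₁)), fac1, ?_⟩
  refine BinaryCofan.IsColimit.hom_ext hco ?_ (h2.hom_ext _ _)
  simp only [BinaryCofan.mk_inl, Category.comp_id, ← Category.assoc, fac1]
  simp
  have fin : c₁ ≫ hco.desc (BinaryCofan.mk (𝟙 C₁) (h2.to C₁)) ≫ c₁ = c₁ ≫ 𝟙 Z := by
    exact (Category.assoc _ _ _).symm.trans ((congrArg (· ≫ c₁) fac1).trans
      ((Category.id_comp c₁).trans (Category.comp_id c₁).symm))
  exact fin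

/-- Key lemma: given two binary coproduct decompositions of the same object and comparison
morphisms between the summands compatible with the inclusions, the first comparison is iso. -/
private lemma key_iso [HasInitial C] [HasBinaryCoproducts C]
    (hdisj : ∀ {X₁ X₂ X : C} (ι₁ : X₁ ⟶ X) (ι₂ : X₂ ⟶ X), IsCoprodDiagram ι₁ ι₂ →
      Mono ι₁ ∧ Mono ι₂ ∧
      ∃ (P : C) (p₁ : P ⟶ X₁) (p₂ : P ⟶ X₂),
        IsPullback p₁ p₂ ι₁ ι₂ ∧ Nonempty (IsInitial P))
    (hE1 : ∀ {A X : C} (ι : A ⟶ X), IsCoprodInclusion ι → SatE1 ι)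
    {A A₁ A₂ B₁ B₂ : C} (a₁ : A₁ ⟶ A) (a₂ : A₂ ⟶ A) (b₁ : B₁ ⟶ A) (b₂ : B₂ ⟶ A)
    (hA : IsCoprodDiagram a₁ a₂) (hB : IsCoprodDiagram b₁ b₂)
    (h₁ : A₁ ⟶ B₁) (h₂ : A₂ ⟶ B₂) (e₁ : h₁ ≫ b₁ = a₁) (e₂ : h₂ ≫ b₂ = a₂) :
    IsIso h₁ := by
  obtain ⟨mb₁, mb₂, -⟩ := hdisj b₁ b₂ hB
  have S₁ : IsPullback (𝟙 A₁) h₁ a₁ b₁ := by rw [← e₁]; exact isPullback_id_mono h₁ b₁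
  have S₂ : IsPullback (𝟙 A₂) h₂ a₂ b₂ := by rw [← e₂]; exact isPullback_id_mono h₂ b₂
  -- pull back a₂ along the coproduct diagram (b₁, b₂)
  obtain ⟨W₁, W₂, w₁, w₂, s₁, s₂, pw₁, pw₂, hW⟩ :=
    hE1 a₂ ⟨A₁, a₁, coprodSwap hA⟩ b₁ b₂ hB
  have hw₂ : IsIso w₂ := by
    have hw : w₂ = (pw₂.isoIsPullback _ _ S₂).hom := by
      simpa using (IsPullback.isoIsPullback_hom_fst (h := pw₂) (h' := S₂)).symm
    rw [hw]; infer_instance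
  obtain ⟨-, -, P, p₁, p₂, hP, ⟨hPinit⟩⟩ := hdisj w₁ w₂ hW
  have hW₁ : IsInitial W₁ := initial_of_iso_compl hP hPinit hw₂
  -- pull back b₁ along the coproduct diagram (a₁, a₂)
  obtain ⟨Q₁, Q₂, t₁, t₂, r₁, r₂, pq₁, pq₂, ⟨hQ⟩⟩ := hE1 b₁ ⟨B₂, b₂, hB⟩ a₁ a₂ hA
  have hQ₂ : IsInitial Q₂ := hW₁.ofIso (pw₁.isoIsPullback _ _ pq₂.flip)
  have ht₁ : IsIso t₁ := isIso_inl_of_initial hQ hQ₂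
  have hh : h₁ = (S₁.flip.isoIsPullback _ _ pq₁).hom ≫ t₁ :=
    (IsPullback.isoIsPullback_hom_fst (h := S₁.flip) (h' := pq₁)).symm
  rw [hh]; infer_instance

end Helpers

/-- In a category with an initial object and binary coproducts where coproducts are
disjoint and all coproduct inclusions satisfy (E1), every morphism satisfying (E1) is
extensive. -/
theorem satE1_implies_extensive [HasInitial C] [HasBinaryCoproducts C]
    (hdisj : ∀ {X₁ X₂ X : C} (ι₁ : X₁ ⟶ X) (ι₂ : X₂ ⟶ X), IsCoprodDiagram ι₁ ι₂ →
      Mono ι₁ ∧ Mono ι₂ ∧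
      ∃ (P : C) (p₁ : P ⟶ X₁) (p₂ : P ⟶ X₂),
        IsPullback p₁ p₂ ι₁ ι₂ ∧ Nonempty (IsInitial P))
    (hE1 : ∀ {A X : C} (ι : A ⟶ X), IsCoprodInclusion ι → SatE1 ι) :
    ∀ {A X : C} (f : A ⟶ X), SatE1 f → Extensive f := by
  intro A X f hf
  refine ⟨hf, ?_⟩
  intro A₁ A₂ X₁ X₂ a₁ a₂ x₁ x₂ f₁ f₂ w₁ w₂ hX hA
  obtain ⟨B₁, B₂, b₁, b₂, g₁, g₂, pb₁, pb₂, hB⟩ := hf x₁ x₂ hX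
  set h₁ : A₁ ⟶ B₁ := pb₁.lift a₁ f₁ w₁ with hh₁
  set h₂ : A₂ ⟶ B₂ := pb₂.lift a₂ f₂ w₂ with hh₂
  have e₁ : h₁ ≫ b₁ = a₁ := pb₁.lift_fst a₁ f₁ w₁
  have e₁' : h₁ ≫ g₁ = f₁ := pb₁.lift_snd a₁ f₁ w₁
  have e₂ : h₂ ≫ b₂ = a₂ := pb₂.lift_fst a₂ f₂ w₂
  have e₂' : h₂ ≫ g₂ = f₂ := pb₂.lift_snd a₂ f₂ w₂
  haveI i₁ : IsIso h₁ := key_iso @hdisj @hE1 a₁ a₂ b₁ b₂ hA hB h₁ h₂ e₁ e₂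
  haveI i₂ : IsIso h₂ := key_iso @hdisj @hE1 a₂ a₁ b₂ b₁ (coprodSwap hA) (coprodSwap hB) h₂ h₁ e₂ e₁
  constructor
  · have := isPullback_precomp h₁ pb₁
    rwa [e₁, e₁'] at this
  · have := isPullback_precomp h₂ pb₂
    rwa [e₂, e₂'] at this
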